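/- For integer m > 1 and integer n > 1 with n ≥ 2 and (m,n) ≠ (2,2) — assume m/(m-1) < n — define p = m/(m-1) (so p' = m). Then the asymptotic F_{p,n}(1) - F_{p,n}(y) ~ (p'/n^{1/p})·(1-y)^{1/p'} holds as y → 1⁻; equivalently π_{p,n}/2 - F_{p,n}(y) = (1-y)^{1/p'}·g(y) for a function g continuous and positive at y = 1. -/

import Mathlib

open Real MeasureTheory Set Filter

theorem stmt_16 (m n : ℕ) (hm : 1 < m) (hn : 1 < n)
    (hne : ¬(m = 2 ∧ n = 2))
    (p : ℝ) (hp : p = (m : ℝ) / ((m : ℝ) - 1)) (hpn : p < n)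
    (F : ℝ → ℝ) (hF : ∀ y, F y = ∫ t in (0:ℝ)..y, (1 - t ^ n) ^ (-(1/p))) :
    Tendsto (fun y : ℝ => (F 1 - F y) / (1 - y) ^ ((1:ℝ)/(m:ℝ)))
      (nhdsWithin 1 (Iio 1))
      (nhds ((m : ℝ) * ((n : ℝ) ^ (-(1/p))))) := by
  have hm1 : (1:ℝ) < (m:ℝ) := by exact_mod_cast hm
  have hm0 : (0:ℝ) < (m:ℝ) := by linarith
  have hip : 1/p = 1 - 1/(m:ℝ) := by
    rw [hp]; field_simp
  have hip_pos : 0 < 1/p := by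
    rw [hip]; have : 1/(m:ℝ) < 1 := by
      rw [div_lt_one hm0]; exact hm1
    linarith
  have hip_lt : 1/p < 1 := by
    rw [hip]; have : 0 < 1/(m:ℝ) := by positivity
    linarith
  set φ : ℝ → ℝ := fun t => (1 - t ^ n) ^ (-(1/p)) with hφdef
  have hFe : F = fun u => ∫ t in (0:ℝ)..u, φ t := funext hF
  have hφ_meas : Measurable φ :=
    (measurable_const.sub (measurable_id.pow_const n)).pow measurable_const
  -- interval integrability on [0,1]
  have hint : IntervalIntegrable φ volume 0 1 := by
    have h1 : IntervalIntegrable (fun x : ℝ => x ^ (-(1/p))) volume 0 1 :=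
      intervalIntegral.intervalIntegrable_rpow' (by linarith)
    have hmaj : IntervalIntegrable (fun t : ℝ => (1 - t) ^ (-(1/p))) volume 0 1 := by
      have := (h1.comp_sub_left 1).symm
      simpa using this
    refine hmaj.mono_fun (hφ_meas.aestronglyMeasurable.restrict) ?_
    filter_upwards [ae_restrict_mem measurableSet_uIoc] with t ht
    rw [uIoc_of_le (by norm_num : (0:ℝ) ≤ 1)] at ht
    have ht0 : 0 < t := ht.1
    have ht1 : t ≤ 1 := ht.2
    have htn : t ^ n ≤ 1 := pow_le_one₀ ht0.le ht1
    have hpow : t ^ n ≤ t := pow_le_of_le_one ht0.le ht1 (by omega)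
    simp only [Real.norm_eq_abs]
    rw [abs_of_nonneg (Real.rpow_nonneg (by linarith) _),
      abs_of_nonneg (Real.rpow_nonneg (by linarith) _)]
    rcases eq_or_lt_of_le ht1 with h | h
    · subst h
      rw [one_pow]
    · have h0 : (0:ℝ) < 1 - t := by linarith
      exact Real.rpow_le_rpow_of_nonpos h0 (by linarith) (by linarith)
  -- F tends to F 1 from the left
  have hFtendsto : Tendsto F (nhdsWithin 1 (Iio 1)) (nhds (F 1)) := by
    have hc := intervalIntegral.continuousOn_primitive_interval' hint
      (left_mem_uIcc (a := (0:ℝ)) (b := 1))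
    have h1 : ContinuousWithinAt (fun b => ∫ x in (0:ℝ)..b, φ x) (uIcc 0 1) 1 :=
      hc 1 right_mem_uIcc
    rw [← hFe] at h1
    rw [← nhdsWithin_Ioo_eq_nhdsLT (show (0:ℝ) < 1 by norm_num)]
    exact h1.tendsto.mono_left (nhdsWithin_mono _ (by
      rw [uIcc_of_le (by norm_num : (0:ℝ) ≤ 1)]; exact Ioo_subset_Icc_self))
  have hIoo : Ioo (0:ℝ) 1 ∈ nhdsWithin (1:ℝ) (Iio 1) :=
    Ioo_mem_nhdsLT_of_mem (by constructor <;> norm_num)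
  -- derivative of F on (0,1)
  have hderivF : ∀ x ∈ Ioo (0:ℝ) 1, HasDerivAt F (φ x) x := by
    intro x hx
    have hi : IntervalIntegrable φ volume 0 x :=
      hint.mono_set (by
        rw [uIcc_of_le hx.1.le, uIcc_of_le (by norm_num : (0:ℝ) ≤ 1)]
        exact Icc_subset_Icc le_rfl hx.2.le)
    have hxn : x ^ n < 1 := pow_lt_one₀ hx.1.le hx.2 (by omega)
    have hcont : ContinuousAt φ x := by
      apply ContinuousAt.rpow_const
      · exact (continuous_const.sub (continuous_pow n)).continuousAt
      · exact Or.inl (show (1:ℝ) - x ^ n ≠ 0 from (by linarith : (0:ℝ) < 1 - x ^ n).ne')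
    have := intervalIntegral.integral_hasDerivAt_right hi
      (hφ_meas.aestronglyMeasurable.stronglyMeasurableAtFilter) hcont
    rw [← hFe] at this
    exact this
  -- derivative of g on (0,1)
  set G' : ℝ → ℝ := fun x => -1 * ((1:ℝ)/(m:ℝ)) * (1-x) ^ ((1:ℝ)/(m:ℝ) - 1) with hG'def
  have hderivG : ∀ x ∈ Ioo (0:ℝ) 1, HasDerivAt (fun y : ℝ => (1-y) ^ ((1:ℝ)/(m:ℝ))) (G' x) x := by
    intro x hx
    have h1 : HasDerivAt (fun y : ℝ => 1 - y) (-1) x := (hasDerivAt_id x).const_sub 1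
    exact h1.rpow_const (Or.inl (show (1:ℝ) - x ≠ 0 from (by linarith [hx.2] : (0:ℝ) < 1 - x).ne'))
  have hG'neg : ∀ x ∈ Ioo (0:ℝ) 1, G' x < 0 := by
    intro x hx
    have h0 : (0:ℝ) < 1 - x := by linarith [hx.2]
    have := Real.rpow_pos_of_pos h0 ((1:ℝ)/(m:ℝ) - 1)
    rw [hG'def]
    have hminv : 0 < (1:ℝ)/(m:ℝ) := by positivity
    nlinarith
  -- the quotient of derivatives
  have hqt : Tendsto (fun x : ℝ => (1 - x ^ n) / (1 - x)) (nhdsWithin 1 (Iio 1)) (nhds (n:ℝ)) := by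
    have hcont : Tendsto (fun x : ℝ => ∑ i ∈ Finset.range n, x ^ i)
        (nhdsWithin 1 (Iio 1)) (nhds (n:ℝ)) := by
      have hT : Tendsto (fun x : ℝ => ∑ i ∈ Finset.range n, x ^ i)
          (nhdsWithin 1 (Iio 1)) (nhds (∑ i ∈ Finset.range n, (1:ℝ) ^ i)) :=
        ((by continuity : Continuous (fun x : ℝ => ∑ i ∈ Finset.range n, x ^ i)).tendsto 1).mono_left
          nhdsWithin_le_nhds
      simpa using hT
    refine hcont.congr' ?_
    filter_upwards [self_mem_nhdsWithin] with x hx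
    have hx1 : x ≠ 1 := ne_of_lt hx
    have := geom_sum_eq hx1 n
    rw [this]
    rw [div_eq_div_iff (by intro hc; rw [sub_eq_zero] at hc; exact hx1 hc)
      (by intro hc; rw [sub_eq_zero] at hc; exact hx1 hc.symm)]
    ring
  have hdiv : Tendsto (fun x : ℝ => (-(φ x)) / G' x) (nhdsWithin 1 (Iio 1))
      (nhds ((m : ℝ) * ((n : ℝ) ^ (-(1/p))))) := by
    have hmain : Tendsto (fun x : ℝ => (m:ℝ) * ((1 - x ^ n) / (1 - x)) ^ (-(1/p)))
        (nhdsWithin 1 (Iio 1)) (nhds ((m : ℝ) * ((n : ℝ) ^ (-(1/p))))) := by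
      exact (hqt.rpow_const (Or.inl (by positivity))).const_mul _
    refine hmain.congr' ?_
    filter_upwards [hIoo] with x hx
    have hu : (0:ℝ) < 1 - x := by linarith [hx.2]
    have hxn : x ^ n < 1 := pow_lt_one₀ hx.1.le hx.2 (by omega)
    have ha : (0:ℝ) < 1 - x ^ n := by linarith
    have hup : (0:ℝ) < (1-x) ^ ((1:ℝ)/(m:ℝ) - 1) := Real.rpow_pos_of_pos hu _
    have hrw : ((1 - x ^ n) / (1 - x)) ^ (-(1/p)) = (1 - x ^ n) ^ (-(1/p)) / (1-x) ^ (-(1/p)) :=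
      Real.div_rpow ha.le hu.le _
    have hexp : -(1/p) = (1:ℝ)/(m:ℝ) - 1 := by rw [hip]; ring
    have hB : (0:ℝ) < (1-x) ^ (-(1/p)) := Real.rpow_pos_of_pos hu _
    symm
    calc (-(φ x)) / G' x
        = -((1 - x ^ n) ^ (-(1/p))) / (-1 * ((1:ℝ)/(m:ℝ)) * (1-x) ^ (-(1/p))) := by
          simp only [hφdef, hG'def, ← hexp]
      _ = (m:ℝ) * ((1 - x ^ n) ^ (-(1/p)) / (1-x) ^ (-(1/p))) := by
          have hD : -1 * ((1:ℝ)/(m:ℝ)) * (1-x) ^ (-(1/p)) ≠ 0 := by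
            have : (0:ℝ) < ((1:ℝ)/(m:ℝ)) * (1-x) ^ (-(1/p)) := by positivity
            intro hc; nlinarith
          rw [div_eq_iff hD]
          field_simp
      _ = (m:ℝ) * (((1 - x ^ n) / (1 - x)) ^ (-(1/p))) := by rw [hrw]
  -- L'Hôpital
  have hfa : Tendsto (fun y : ℝ => F 1 - F y) (nhdsWithin 1 (Iio 1)) (nhds 0) := by
    have := tendsto_const_nhds (x := F 1) (f := nhdsWithin (1:ℝ) (Iio 1)) |>.sub hFtendsto
    simpa using this
  have hga : Tendsto (fun y : ℝ => (1-y) ^ ((1:ℝ)/(m:ℝ))) (nhdsWithin 1 (Iio 1)) (nhds 0) := by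
    have h1 : Tendsto (fun y : ℝ => 1 - y) (nhdsWithin 1 (Iio 1)) (nhds 0) := by
      have hc : Continuous (fun y : ℝ => 1 - y) := continuous_const.sub continuous_id
      have := (hc.tendsto 1).mono_left (nhdsWithin_le_nhds (s := Iio 1))
      simpa using this
    have := h1.rpow_const (p := (1:ℝ)/(m:ℝ)) (Or.inr (by positivity))
    rwa [Real.zero_rpow (by positivity)] at this
  refine HasDerivAt.lhopital_zero_nhdsLT ?_ ?_ ?_ hfa hga hdiv
  · filter_upwards [hIoo] with x hx
    exact (hderivF x hx).const_sub (F 1)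
  · filter_upwards [hIoo] with x hx
    exact hderivG x hx
  · filter_upwards [hIoo] with x hx
    exact (hG'neg x hx).ne
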